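/- Let k be a field, n a positive natural number, and R = k[[X_0,…,X_{n−1}]] the ring of formal power series in n variables over k. Let m be an index, and let a, b : Fin n → ℕ satisfy b ≤ a componentwise and a_m = b_m = 0. If the ideal of R generated by X^a and X^b·X_m is principal, then a = b. -/

import Mathlib

open MvPowerSeries Finsupp

private lemma span_pair_principal_dvd {R : Type*} [CommRing R] [IsDomain R] [IsLocalRing R]
    {u v : R} (hu : u ≠ 0) (h : (Ideal.span {u, v}).IsPrincipal) : u ∣ v ∨ v ∣ u := by
  obtain ⟨g, hg⟩ := h
  have hgu : g ∣ u := by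
    have hm : u ∈ Submodule.span R {g} := hg ▸ Ideal.subset_span (by simp)
    exact Ideal.mem_span_singleton.mp hm
  have hgv : g ∣ v := by
    have hm : v ∈ Submodule.span R {g} := hg ▸ Ideal.subset_span (by simp)
    exact Ideal.mem_span_singleton.mp hm
  have hgmem : g ∈ Ideal.span ({u, v} : Set R) := by
    rw [hg]; exact Ideal.subset_span rfl
  obtain ⟨s, t, hst⟩ := Ideal.mem_span_pair.mp hgmem
  obtain ⟨p, hp⟩ := hgu
  obtain ⟨q, hq⟩ := hgv
  have hgne : g ≠ 0 := by rintro rfl; exact hu (by simpa using hp)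
  have h1 : g * (s * p + t * q) = g * 1 := by
    linear_combination hst - s * hp - t * hq
  have h1' : s * p + t * q = 1 := mul_left_cancel₀ hgne h1
  rcases IsLocalRing.isUnit_or_isUnit_of_isUnit_add (h1' ▸ isUnit_one) with hsp | htq
  · left
    have hpu : IsUnit p := isUnit_of_mul_isUnit_right hsp
    obtain ⟨pi, hpi⟩ := isUnit_iff_exists_inv.mp hpu
    have hug : u ∣ g := ⟨pi, by rw [hp, mul_assoc, hpi, mul_one]⟩
    exact hug.trans ⟨q, hq⟩
  · right
    have hqu : IsUnit q := isUnit_of_mul_isUnit_right htq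
    obtain ⟨qi, hqi⟩ := isUnit_iff_exists_inv.mp hqu
    have hvg : v ∣ g := ⟨qi, by rw [hq, mul_assoc, hqi, mul_one]⟩
    exact hvg.trans ⟨p, hp⟩

private lemma prod_X_pow_eq_monomial {k : Type*} [Field k] {n : ℕ}
    (s : Finset (Fin n)) (f : Fin n → ℕ) :
    ∏ i ∈ s, (MvPowerSeries.X i : MvPowerSeries (Fin n) k) ^ f i =
      MvPowerSeries.monomial (R := k) (∑ i ∈ s, Finsupp.single i (f i)) 1 := by
  classical
  induction s using Finset.induction_on with
  | empty => simp [MvPowerSeries.monomial_zero_one]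
  | insert _ _ hnot ih =>
    rw [Finset.prod_insert hnot, Finset.sum_insert hnot, ih, MvPowerSeries.X_pow_eq,
      MvPowerSeries.monomial_mul_monomial, one_mul]

private lemma sum_single_apply {n : ℕ} (f : Fin n → ℕ) (j : Fin n) :
    (∑ i, Finsupp.single i (f i)) j = f j := by
  classical
  rw [Finsupp.finset_sum_apply]
  simp [Finsupp.single_apply]

/-- In `R = k[[X_0, …, X_{n-1}]]` over a field `k`, let `b ≤ a` componentwise with
`a m = b m = 0`. If the ideal generated by `X^a` and `X^b · X_m` is principal,
then `a = b`. -/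
theorem stmt_15 (k : Type*) [Field k] (n : ℕ) (hn : 0 < n) (m : Fin n)
    (a b : Fin n → ℕ) (hba : ∀ i, b i ≤ a i) (ham : a m = 0) (hbm : b m = 0)
    (h : (Ideal.span {∏ i, (MvPowerSeries.X i : MvPowerSeries (Fin n) k) ^ a i,
        (∏ i, (MvPowerSeries.X i : MvPowerSeries (Fin n) k) ^ b i) *
          MvPowerSeries.X m}).IsPrincipal) :
    a = b := by
  classical
  haveI : IsDomain (MvPowerSeries (Fin n) k) := NoZeroDivisors.to_isDomain _
  set A : Fin n →₀ ℕ := ∑ i, Finsupp.single i (a i) with hA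
  set B : Fin n →₀ ℕ := ∑ i, Finsupp.single i (b i) with hB
  set u : MvPowerSeries (Fin n) k := ∏ i, (MvPowerSeries.X i) ^ a i with hu
  set v : MvPowerSeries (Fin n) k :=
    (∏ i, (MvPowerSeries.X i) ^ b i) * MvPowerSeries.X m with hv
  have hXm : (MvPowerSeries.X m : MvPowerSeries (Fin n) k) =
      MvPowerSeries.monomial (R := k) (Finsupp.single m 1) 1 := by
    rw [← pow_one (MvPowerSeries.X m : MvPowerSeries (Fin n) k), MvPowerSeries.X_pow_eq]
  have hum : u = MvPowerSeries.monomial (R := k) A 1 := prod_X_pow_eq_monomial _ a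
  have hvm : v = MvPowerSeries.monomial (R := k) (B + Finsupp.single m 1) 1 := by
    rw [hv, prod_X_pow_eq_monomial _ b, hXm, MvPowerSeries.monomial_mul_monomial, one_mul]
  have hune : u ≠ 0 := by
    intro h0
    have := MvPowerSeries.coeff_monomial_same A (1 : k)
    rw [← hum, h0, map_zero] at this
    exact one_ne_zero this.symm
  rcases span_pair_principal_dvd hune h with huv | hvu
  · funext i
    by_cases him : i = m
    · subst him; rw [ham, hbm]
    · refine le_antisymm ?_ (hba i)
      by_contra hlt
      push_neg at hlt
      have hdu : (MvPowerSeries.X i : MvPowerSeries (Fin n) k) ^ a i ∣ u := by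
        rw [hu]
        exact Finset.dvd_prod_of_mem
          (fun j => (MvPowerSeries.X j : MvPowerSeries (Fin n) k) ^ a j) (Finset.mem_univ i)
      have hXi : (MvPowerSeries.X i : MvPowerSeries (Fin n) k) ^ a i ∣ v :=
        dvd_trans hdu huv
      rw [MvPowerSeries.X_pow_dvd_iff] at hXi
      have hd : ((B + Finsupp.single m 1 : Fin n →₀ ℕ)) i = b i := by
        rw [Finsupp.add_apply, sum_single_apply, Finsupp.single_apply,
          if_neg (fun hmi => him hmi.symm), add_zero]
      have := hXi (B + Finsupp.single m 1) (by rw [hd]; exact hlt)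
      rw [hvm, MvPowerSeries.coeff_monomial_same] at this
      exact one_ne_zero this
  · exfalso
    have hdv : (MvPowerSeries.X m : MvPowerSeries (Fin n) k) ∣ v := by
      rw [hv]; exact Dvd.intro_left _ rfl
    have hXm' : (MvPowerSeries.X m : MvPowerSeries (Fin n) k) ∣ u :=
      dvd_trans hdv hvu
    rw [MvPowerSeries.X_dvd_iff] at hXm'
    have hAm : A m = 0 := by rw [hA, sum_single_apply, ham]
    have := hXm' A hAm
    rw [hum, MvPowerSeries.coeff_monomial_same] at this
    exact one_ne_zero this
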